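/- Let A be a group with the unique root property, let F ≤ A be a subgroup, and let N ⊴ F be a normal subgroup of F that is infinite cyclic, generated by an element t of A. Then N is central in F; that is, every element of F commutes with t. -/

import Mathlib

/-- If `A` has the unique root property, `F ≤ A`, and `N = ⟨t⟩` is an infinite
cyclic normal subgroup of `F`, then `N` is central in `F`: every element of `F` commutes
with `t`. -/
theorem stmt_4 {A : Type*} [Group A]
    (hroot : ∀ (g h : A) (m : ℤ), m ≠ 0 → g ^ m = h ^ m → g = h)
    (F : Subgroup A) (t : A) (htF : t ∈ F) (hinf : ¬ IsOfFinOrder t)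
    (hnorm : ((Subgroup.zpowers t).subgroupOf F).Normal) :
    ∀ f ∈ F, f * t = t * f := by
  intro f hfF
  have hinj : Function.Injective (fun n : ℤ => t ^ n) :=
    injective_zpow_iff_not_isOfFinOrder.mpr hinf
  have htmem : (⟨t, htF⟩ : F) ∈ (Subgroup.zpowers t).subgroupOf F := by
    simp [Subgroup.mem_subgroupOf, Subgroup.mem_zpowers]
  -- conjugation by f and f⁻¹
  have h1 := hnorm.conj_mem ⟨t, htF⟩ htmem ⟨f, hfF⟩
  have h2 := hnorm.conj_mem ⟨t, htF⟩ htmem ⟨f, hfF⟩⁻¹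
  rw [Subgroup.mem_subgroupOf] at h1 h2
  obtain ⟨a, ha⟩ := h1
  obtain ⟨b, hb⟩ := h2
  simp only [Subgroup.coe_mul, Subgroup.coe_inv, inv_inv] at ha hb
  -- ha : t ^ a = f * t * f⁻¹, hb : t ^ b = f⁻¹ * t * f
  have hab : t ^ (b * a) = t ^ (1 : ℤ) := by
    have key : f⁻¹ * t ^ a * f = t ^ (b * a) := by
      rw [zpow_mul, hb]
      calc f⁻¹ * t ^ a * f = f⁻¹ * t ^ a * f⁻¹⁻¹ := by rw [inv_inv]
        _ = (f⁻¹ * t * f⁻¹⁻¹) ^ a := (conj_zpow).symm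
        _ = (f⁻¹ * t * f) ^ a := by rw [inv_inv]
    have key2 : f⁻¹ * t ^ a * f = t := by
      rw [ha]; group
    rw [← key, key2, zpow_one]
  have hab1 : b * a = 1 := hinj hab
  have ha1 : a = 1 ∨ a = -1 := Int.isUnit_iff.mp (IsUnit.of_mul_eq_one (a := a) b (by linarith [hab1, Int.mul_comm a b]))
  rcases ha1 with ha1 | ha1
  · rw [ha1, zpow_one] at ha
    have h : t * f = f * t := by
      conv_lhs => rw [ha]
      group
    exact h.symm
  · rw [ha1] at ha
    rw [zpow_neg_one] at ha
    have hft : f * t = t⁻¹ * f := by rw [ha]; group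
    have hsq : (t * f) ^ (2 : ℤ) = f ^ (2 : ℤ) := by
      have : (t * f) * (t * f) = f * f := by
        rw [show (t * f) * (t * f) = t * (f * t) * f by group, hft]
        group
      rw [zpow_two, zpow_two]; exact this
    have := hroot (t * f) f 2 (by norm_num) hsq
    have ht1 : t = 1 := by
      have := mul_right_cancel (b := f) (by simpa using this)
      simpa using this
    exact absurd (ht1 ▸ IsOfFinOrder.one) hinf
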